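/- For every integer k ≥ 2 there exist constants c > 0 and C > 0 such that for all real numbers ξ₁, ξ₂, ξ₃, one has c · max{|ξ₁|, |ξ₂|, |ξ₃|}^{2k−2} ≤ P_k(ξ₁, ξ₂, ξ₃) ≤ C · max{|ξ₁|, |ξ₂|, |ξ₃|}^{2k−2}. -/

import Mathlib

open Finset in
/-- The explicit polynomial `P_k` from the factorization of the phase factor `Φ_{2k}`. -/
noncomputable def phasePoly (k : ℕ) (ξ₁ ξ₂ ξ₃ : ℝ) : ℝ :=
  (∑ m ∈ Finset.Icc 1 (2 * k - 2),
      ξ₃ ^ m * ∑ q ∈ Finset.range (2 * k - 2 - m + 1), ξ₁ ^ q * ξ₂ ^ (2 * k - 2 - m - q)) +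
    (∑ q ∈ Finset.range (2 * k - 2 + 1), ξ₁ ^ q * ξ₂ ^ (2 * k - 2 - q)) +
    ∑ m ∈ Finset.Icc 1 (2 * k - 1),
      ξ₁ ^ (2 * k - 1 - m) *
        ∑ p ∈ Finset.range m, (m.choose p : ℝ) * (ξ₁ - ξ₂) ^ (m - p - 1) * ξ₃ ^ p

namespace PhaseAux
open Finset

noncomputable def Qp (n : ℕ) (x y z : ℝ) : ℝ :=
  (∑ m ∈ Icc 1 n, z ^ m * ∑ q ∈ range (n - m + 1), x ^ q * y ^ (n - m - q)) +
    (∑ q ∈ range (n + 1), x ^ q * y ^ (n - q)) +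
    ∑ m ∈ Icc 1 (n + 1),
      x ^ (n + 1 - m) * ∑ p ∈ range m, (m.choose p : ℝ) * (x - y) ^ (m - p - 1) * z ^ p

lemma phasePoly_eq (k : ℕ) (hk : 1 ≤ k) (x y z : ℝ) :
    phasePoly k x y z = Qp (2 * k - 2) x y z := by
  have h : 2 * k - 1 = 2 * k - 2 + 1 := by omega
  rw [phasePoly, Qp, h]

lemma sum_Icc_one {M : Type*} [AddCommMonoid M] (N : ℕ) (f : ℕ → M) :
    ∑ m ∈ Icc 1 N, f m = ∑ i ∈ range N, f (i + 1) := by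
  rw [← Finset.Ico_add_one_right_eq_Icc, Finset.sum_Ico_eq_sum_range]
  simp [add_comm]

lemma geom_mul (x y : ℝ) (N : ℕ) :
    (∑ q ∈ range (N + 1), x ^ q * y ^ (N - q)) * (x - y) = x ^ (N + 1) - y ^ (N + 1) := by
  simpa using geom_sum₂_mul x y (N + 1)

lemma binom_mul (w z : ℝ) (m : ℕ) :
    (∑ p ∈ range m, (m.choose p : ℝ) * w ^ (m - p - 1) * z ^ p) * w
      = (w + z) ^ m - z ^ m := by
  rw [Finset.sum_mul]
  have h1 : ∀ p ∈ range m, (m.choose p : ℝ) * w ^ (m - p - 1) * z ^ p * w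
      = z ^ p * w ^ (m - p) * (m.choose p : ℝ) := by
    intro p hp
    rw [mem_range] at hp
    rw [show (m.choose p : ℝ) * w ^ (m - p - 1) * z ^ p * w
        = z ^ p * (w ^ (m - p - 1) * w) * (m.choose p : ℝ) from by ring,
      ← pow_succ, show m - p - 1 + 1 = m - p by omega]
  rw [Finset.sum_congr rfl h1]
  have h2 : (z + w) ^ m = (∑ p ∈ range m, z ^ p * w ^ (m - p) * (m.choose p : ℝ)) + z ^ m := by
    rw [add_pow, Finset.sum_range_succ]
    simp
  rw [show w + z = z + w by ring, h2]
  ring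

lemma key (n : ℕ) (x y z : ℝ) :
    (x - y) * Qp n x y z
      = ∑ m ∈ range (n + 2),
          (x ^ m * (x - y + z) ^ (n + 1 - m) - y ^ m * z ^ (n + 1 - m)) := by
  have hS1 : (x - y) * (∑ m ∈ Icc 1 n, z ^ m * ∑ q ∈ range (n - m + 1), x ^ q * y ^ (n - m - q))
      = (∑ i ∈ range n, z ^ (i + 1) * x ^ (n - i)) - ∑ i ∈ range n, z ^ (i + 1) * y ^ (n - i) := by
    have e1 : ∀ m ∈ Icc 1 n,
        (x - y) * (z ^ m * ∑ q ∈ range (n - m + 1), x ^ q * y ^ (n - m - q))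
          = z ^ m * (x ^ (n - m + 1)) - z ^ m * (y ^ (n - m + 1)) := by
      intro m _
      rw [show (x - y) * (z ^ m * ∑ q ∈ range (n - m + 1), x ^ q * y ^ (n - m - q))
          = z ^ m * ((∑ q ∈ range (n - m + 1), x ^ q * y ^ (n - m - q)) * (x - y)) from by ring,
        geom_mul x y (n - m)]
      ring
    rw [Finset.mul_sum, Finset.sum_congr rfl e1, Finset.sum_sub_distrib,
      sum_Icc_one n (fun m => z ^ m * x ^ (n - m + 1)),
      sum_Icc_one n (fun m => z ^ m * y ^ (n - m + 1))]
    congr 1 <;> exact Finset.sum_congr rfl fun i hi => by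
      rw [mem_range] at hi
      rw [show n - (i + 1) + 1 = n - i from by omega]
  have hS2 : (x - y) * (∑ q ∈ range (n + 1), x ^ q * y ^ (n - q))
      = x ^ (n + 1) - y ^ (n + 1) := by
    rw [mul_comm, geom_mul]
  have hS3 : (x - y) * (∑ m ∈ Icc 1 (n + 1),
        x ^ (n + 1 - m) * ∑ p ∈ range m, (m.choose p : ℝ) * (x - y) ^ (m - p - 1) * z ^ p)
      = (∑ i ∈ range (n + 1), x ^ (n - i) * (x - y + z) ^ (i + 1))
        - ∑ i ∈ range (n + 1), x ^ (n - i) * z ^ (i + 1) := by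
    have e1 : ∀ m ∈ Icc 1 (n + 1),
        (x - y) * (x ^ (n + 1 - m) * ∑ p ∈ range m,
            (m.choose p : ℝ) * (x - y) ^ (m - p - 1) * z ^ p)
          = x ^ (n + 1 - m) * (x - y + z) ^ m - x ^ (n + 1 - m) * z ^ m := by
      intro m _
      rw [show (x - y) * (x ^ (n + 1 - m) * ∑ p ∈ range m,
            (m.choose p : ℝ) * (x - y) ^ (m - p - 1) * z ^ p)
          = x ^ (n + 1 - m) * ((∑ p ∈ range m,
            (m.choose p : ℝ) * (x - y) ^ (m - p - 1) * z ^ p) * (x - y)) from by ring,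
        binom_mul (x - y) z m]
      ring
    rw [Finset.mul_sum, Finset.sum_congr rfl e1, Finset.sum_sub_distrib,
      sum_Icc_one (n + 1) (fun m => x ^ (n + 1 - m) * (x - y + z) ^ m),
      sum_Icc_one (n + 1) (fun m => x ^ (n + 1 - m) * z ^ m)]
    congr 1 <;> exact Finset.sum_congr rfl fun i hi => by rw [Nat.succ_sub_succ]
  have hT3z : (∑ i ∈ range (n + 1), x ^ (n - i) * z ^ (i + 1))
      = (∑ i ∈ range n, z ^ (i + 1) * x ^ (n - i)) + z ^ (n + 1) := by
    rw [Finset.sum_range_succ, Nat.sub_self, pow_zero, one_mul,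
      Finset.sum_congr rfl (fun i (_ : i ∈ range n) => mul_comm (x ^ (n - i)) (z ^ (i + 1)))]
  have hRA : (∑ m ∈ range (n + 2), x ^ m * (x - y + z) ^ (n + 1 - m))
      = (∑ i ∈ range (n + 1), x ^ (n - i) * (x - y + z) ^ (i + 1)) + x ^ (n + 1) := by
    rw [← Finset.sum_range_reflect (fun m => x ^ m * (x - y + z) ^ (n + 1 - m)) (n + 2)]
    have e1 : ∀ j ∈ range (n + 2),
        x ^ (n + 2 - 1 - j) * (x - y + z) ^ (n + 1 - (n + 2 - 1 - j))
          = x ^ (n + 1 - j) * (x - y + z) ^ j := by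
      intro j hj
      rw [mem_range] at hj
      rw [show n + 2 - 1 - j = n + 1 - j from by omega,
        show n + 1 - (n + 1 - j) = j from by omega]
    rw [Finset.sum_congr rfl e1,
      Finset.sum_range_succ' (fun j => x ^ (n + 1 - j) * (x - y + z) ^ j) (n + 1)]
    simp [Nat.succ_sub_succ]
  have hRz : (∑ m ∈ range (n + 2), y ^ m * z ^ (n + 1 - m))
      = ((∑ i ∈ range n, z ^ (i + 1) * y ^ (n - i)) + z ^ (n + 1)) + y ^ (n + 1) := by
    rw [Finset.sum_range_succ, Nat.sub_self, pow_zero, mul_one,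
      ← Finset.sum_range_reflect (fun m => y ^ m * z ^ (n + 1 - m)) (n + 1)]
    have e1 : ∀ j ∈ range (n + 1),
        y ^ (n + 1 - 1 - j) * z ^ (n + 1 - (n + 1 - 1 - j)) = z ^ (j + 1) * y ^ (n - j) := by
      intro j hj
      rw [mem_range] at hj
      rw [show n + 1 - 1 - j = n - j from by omega,
        show n + 1 - (n - j) = j + 1 from by omega, mul_comm]
    rw [Finset.sum_congr rfl e1, Finset.sum_range_succ (fun j => z ^ (j + 1) * y ^ (n - j)) n,
      Nat.sub_self, pow_zero, mul_one]
  rw [Qp, Finset.sum_sub_distrib, hRA, hRz, mul_add, mul_add, hS1, hS2, hS3, hT3z]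
  ring

lemma Qp_diag (n : ℕ) (y z : ℝ) :
    Qp n y y z = ((n : ℝ) + 2) * ∑ m ∈ range (n + 1), z ^ m * y ^ (n - m) := by
  have hinner : ∀ m, (∑ q ∈ range (n - m + 1), y ^ q * y ^ (n - m - q))
      = ((n - m + 1 : ℕ) : ℝ) * y ^ (n - m) := by
    intro m
    have e : ∀ q ∈ range (n - m + 1), y ^ q * y ^ (n - m - q) = y ^ (n - m) := by
      intro q hq
      rw [mem_range] at hq
      rw [← pow_add]
      congr 1
      omega
    rw [Finset.sum_congr rfl e, Finset.sum_const, card_range, nsmul_eq_mul]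
  have hinner3 : ∀ m, 1 ≤ m →
      (∑ p ∈ range m, (m.choose p : ℝ) * (y - y) ^ (m - p - 1) * z ^ p)
        = (m : ℝ) * z ^ (m - 1) := by
    intro m hm
    rw [sub_self]
    rw [Finset.sum_eq_single (m - 1)]
    · rw [show m - (m - 1) - 1 = 0 from by omega, pow_zero, mul_one,
        Nat.choose_symm hm, Nat.choose_one_right]
    · intro p hp hne
      rw [mem_range] at hp
      rw [zero_pow (show m - p - 1 ≠ 0 from by omega)]
      ring
    · intro h
      exact absurd (mem_range.mpr (by omega)) h
  have hS12 : (∑ m ∈ Icc 1 n, z ^ m * ∑ q ∈ range (n - m + 1), y ^ q * y ^ (n - m - q))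
        + (∑ q ∈ range (n + 1), y ^ q * y ^ (n - q))
      = ∑ i ∈ range (n + 1), ((n - i + 1 : ℕ) : ℝ) * (z ^ i * y ^ (n - i)) := by
    rw [Finset.sum_range_succ' (fun i => ((n - i + 1 : ℕ) : ℝ) * (z ^ i * y ^ (n - i))) n]
    congr 1
    · rw [Finset.sum_congr rfl (fun m (_ : m ∈ Icc 1 n) => by rw [hinner m]),
        sum_Icc_one n (fun m => z ^ m * (((n - m + 1 : ℕ) : ℝ) * y ^ (n - m)))]
      exact Finset.sum_congr rfl fun i hi => by ring
    · have h0 := hinner 0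
      simp only [Nat.sub_zero] at h0
      rw [h0]
      simp only [Nat.sub_zero, pow_zero]
      push_cast
      ring
  have hS3 : (∑ m ∈ Icc 1 (n + 1),
        y ^ (n + 1 - m) * ∑ p ∈ range m, (m.choose p : ℝ) * (y - y) ^ (m - p - 1) * z ^ p)
      = ∑ i ∈ range (n + 1), ((i + 1 : ℕ) : ℝ) * (z ^ i * y ^ (n - i)) := by
    have e : ∀ m ∈ Icc 1 (n + 1),
        y ^ (n + 1 - m) * ∑ p ∈ range m, (m.choose p : ℝ) * (y - y) ^ (m - p - 1) * z ^ p
          = y ^ (n + 1 - m) * ((m : ℝ) * z ^ (m - 1)) := by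
      intro m hm
      rw [mem_Icc] at hm
      rw [hinner3 m hm.1]
    rw [Finset.sum_congr rfl e,
      sum_Icc_one (n + 1) (fun m => y ^ (n + 1 - m) * ((m : ℝ) * z ^ (m - 1)))]
    refine Finset.sum_congr rfl fun i hi => ?_
    rw [Nat.succ_sub_succ, Nat.add_sub_cancel]
    push_cast
    ring
  rw [Qp, hS12, hS3, ← Finset.sum_add_distrib, Finset.mul_sum]
  refine Finset.sum_congr rfl fun i hi => ?_
  rw [mem_range] at hi
  have hc : ((n - i + 1 : ℕ) : ℝ) + ((i + 1 : ℕ) : ℝ) = (n : ℝ) + 2 := by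
    have h2 : (n - i + 1) + (i + 1) = n + 2 := by omega
    exact_mod_cast congrArg (Nat.cast : ℕ → ℝ) h2
  rw [← add_mul, hc]

lemma Qp_homog (n : ℕ) (l x y z : ℝ) :
    Qp n (l * x) (l * y) (l * z) = l ^ n * Qp n x y z := by
  have inner1 : ∀ m : ℕ, (∑ q ∈ range (n - m + 1), (l * x) ^ q * (l * y) ^ (n - m - q))
      = l ^ (n - m) * ∑ q ∈ range (n - m + 1), x ^ q * y ^ (n - m - q) := by
    intro m
    conv_rhs => rw [Finset.mul_sum]
    refine Finset.sum_congr rfl fun q hq => ?_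
    rw [mem_range] at hq
    rw [mul_pow, mul_pow,
      show l ^ q * x ^ q * (l ^ (n - m - q) * y ^ (n - m - q))
        = (l ^ q * l ^ (n - m - q)) * (x ^ q * y ^ (n - m - q)) from by ring,
      ← pow_add, show q + (n - m - q) = n - m from by omega]
  have h1 : (∑ m ∈ Icc 1 n, (l * z) ^ m
        * ∑ q ∈ range (n - m + 1), (l * x) ^ q * (l * y) ^ (n - m - q))
      = l ^ n * ∑ m ∈ Icc 1 n, z ^ m * ∑ q ∈ range (n - m + 1), x ^ q * y ^ (n - m - q) := by
    conv_rhs => rw [Finset.mul_sum]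
    refine Finset.sum_congr rfl fun m hm => ?_
    rw [mem_Icc] at hm
    rw [inner1 m, mul_pow,
      show l ^ m * z ^ m * (l ^ (n - m) * ∑ q ∈ range (n - m + 1), x ^ q * y ^ (n - m - q))
        = (l ^ m * l ^ (n - m)) * (z ^ m * ∑ q ∈ range (n - m + 1), x ^ q * y ^ (n - m - q))
        from by ring,
      ← pow_add, show m + (n - m) = n from by omega]
  have h2 : (∑ q ∈ range (n + 1), (l * x) ^ q * (l * y) ^ (n - q))
      = l ^ n * ∑ q ∈ range (n + 1), x ^ q * y ^ (n - q) := by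
    have := inner1 0
    simpa only [Nat.sub_zero] using this
  have h3 : (∑ m ∈ Icc 1 (n + 1), (l * x) ^ (n + 1 - m)
        * ∑ p ∈ range m, (m.choose p : ℝ) * (l * x - l * y) ^ (m - p - 1) * (l * z) ^ p)
      = l ^ n * ∑ m ∈ Icc 1 (n + 1),
          x ^ (n + 1 - m) * ∑ p ∈ range m, (m.choose p : ℝ) * (x - y) ^ (m - p - 1) * z ^ p := by
    conv_rhs => rw [Finset.mul_sum]
    refine Finset.sum_congr rfl fun m hm => ?_
    rw [mem_Icc] at hm
    have inner3 : (∑ p ∈ range m, (m.choose p : ℝ) * (l * x - l * y) ^ (m - p - 1) * (l * z) ^ p)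
        = ∑ p ∈ range m, l ^ (m - 1 - p + p) * ((m.choose p : ℝ) * (x - y) ^ (m - p - 1) * z ^ p)
        := by
      refine Finset.sum_congr rfl fun p hp => ?_
      rw [mem_range] at hp
      rw [show l * x - l * y = l * (x - y) from by ring, mul_pow, mul_pow, pow_add,
        show m - 1 - p = m - p - 1 from by omega]
      ring
    rw [inner3]
    have inner4 : (∑ p ∈ range m, l ^ (m - 1 - p + p)
          * ((m.choose p : ℝ) * (x - y) ^ (m - p - 1) * z ^ p))
        = l ^ (m - 1) * ∑ p ∈ range m, (m.choose p : ℝ) * (x - y) ^ (m - p - 1) * z ^ p := by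
      conv_rhs => rw [Finset.mul_sum]
      refine Finset.sum_congr rfl fun p hp => ?_
      rw [mem_range] at hp
      rw [show m - 1 - p + p = m - 1 from by omega]
    rw [inner4, mul_pow,
      show l ^ (n + 1 - m) * x ^ (n + 1 - m)
          * (l ^ (m - 1) * ∑ p ∈ range m, (m.choose p : ℝ) * (x - y) ^ (m - p - 1) * z ^ p)
        = (l ^ (n + 1 - m) * l ^ (m - 1)) * (x ^ (n + 1 - m)
          * ∑ p ∈ range m, (m.choose p : ℝ) * (x - y) ^ (m - p - 1) * z ^ p) from by ring,
      ← pow_add, show n + 1 - m + (m - 1) = n from by omega]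
  rw [Qp, Qp, h1, h2, h3]
  ring

lemma strictMono_aux (N : ℕ) (hN : Even N) (hN2 : 2 ≤ N) {u : ℝ} (hu : 0 < u) :
    StrictMono fun t : ℝ => (t + u) ^ N - t ^ N := by
  apply strictMono_of_hasDerivAt_pos (f' := fun t => N * (t + u) ^ (N - 1) - N * t ^ (N - 1))
  · intro t
    have h1 : HasDerivAt (fun t : ℝ => (t + u) ^ N) ((N : ℝ) * (t + u) ^ (N - 1) * 1) t :=
      ((hasDerivAt_id t).add_const u).pow N
    have h2 := hasDerivAt_pow N t
    simpa [mul_comm] using h1.fun_sub h2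
  · intro t
    have hodd : Odd (N - 1) := Nat.Even.sub_odd (by omega) hN (by norm_num)
    have h3 : t ^ (N - 1) < (t + u) ^ (N - 1) :=
      hodd.strictMono_pow (lt_add_of_pos_right t hu)
    have hN0 : (0 : ℝ) < N := by exact_mod_cast (by omega : 0 < N)
    nlinarith

lemma gmul_pos (N : ℕ) (hN : Even N) (hN2 : 2 ≤ N) (a u v : ℝ) (hu : u ≠ 0) (hv : v ≠ 0) :
    0 < ((a + u + v) ^ N - (a + u) ^ N - (a + v) ^ N + a ^ N) * (u * v) := by
  have base : ∀ a u v A B C D : ℝ, 0 < u → 0 < v →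
      A = a + u + v → B = a + u → C = a + v → D = a →
      0 < A ^ N - B ^ N - C ^ N + D ^ N := by
    intro a u v A B C D hu hv hA hB hC hD
    rw [hA, hB, hC, hD]
    have hm := strictMono_aux N hN hN2 hu
    have h := hm (show a < a + v by linarith)
    simp only [] at h
    have e : a + v + u = a + u + v := by ring
    rw [e] at h
    linarith
  rcases hu.lt_or_gt with hu' | hu' <;> rcases hv.lt_or_gt with hv' | hv'
  · have h := base (a + u + v) (-u) (-v) a (a + v) (a + u) (a + u + v)
      (by linarith) (by linarith) (by ring) (by ring) (by ring) rfl
    have huv : 0 < u * v := mul_pos_of_neg_of_neg hu' hv'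
    nlinarith [mul_pos h huv]
  · have h := base (a + u) (-u) v (a + v) a (a + u + v) (a + u)
      (by linarith) hv' (by ring) (by ring) (by ring) rfl
    have huv : 0 < -(u * v) := by nlinarith
    nlinarith [mul_pos h huv]
  · have h := base (a + v) u (-v) (a + u) (a + u + v) a (a + v)
      hu' (by linarith) (by ring) (by ring) (by ring) rfl
    have huv : 0 < -(u * v) := by nlinarith
    nlinarith [mul_pos h huv]
  · have h := base a u v (a + u + v) (a + u) (a + v) a hu' hv' rfl rfl rfl rfl
    have huv : 0 < u * v := mul_pos hu' hv'
    nlinarith [mul_pos h huv]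

lemma odd_diff_pos (N : ℕ) (hN : Odd N) {a b : ℝ} (hab : a ≠ b) :
    0 < (a ^ N - b ^ N) * (a - b) := by
  rcases hab.lt_or_gt with h | h
  · have h2 : a ^ N < b ^ N := hN.strictMono_pow (R := ℝ) h
    nlinarith
  · have h2 : b ^ N < a ^ N := hN.strictMono_pow (R := ℝ) h
    nlinarith

lemma Qp_pos (n : ℕ) (hn : Even n) (hn1 : 1 ≤ n) (x y z : ℝ)
    (hne : ¬(x = 0 ∧ y = 0 ∧ z = 0)) : 0 < Qp n x y z := by
  have hodd : Odd (n + 1) := Even.add_one hn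
  have hnpos : (0 : ℝ) < (n : ℝ) + 2 := by positivity
  by_cases hxy : x = y
  · subst hxy
    rw [Qp_diag n x z]
    refine mul_pos hnpos ?_
    by_cases hzx : z = x
    · subst hzx
      have he : ∀ m ∈ range (n + 1), z ^ m * z ^ (n - m) = z ^ n := by
        intro m hm
        rw [mem_range] at hm
        rw [← pow_add]
        congr 1
        omega
      rw [Finset.sum_congr rfl he, Finset.sum_const, card_range, nsmul_eq_mul]
      have hz : z ≠ 0 := by
        intro h
        exact hne ⟨h, h, h⟩
      have := hn.pow_pos hz
      positivity
    · have hg := geom_sum₂_mul z x (n + 1)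
      simp only [Nat.add_sub_cancel] at hg
      have hp := odd_diff_pos (n + 1) hodd hzx
      have h2 : 0 < (∑ i ∈ range (n + 1), z ^ i * x ^ (n - i)) * (z - x) ^ 2 := by
        have h3 : (∑ i ∈ range (n + 1), z ^ i * x ^ (n - i)) * (z - x) ^ 2
            = (z ^ (n + 1) - x ^ (n + 1)) * (z - x) := by
          rw [sq]
          linear_combination (z - x) * hg
        rw [h3]
        exact hp
      nlinarith [sq_nonneg (z - x)]
  · have hkey := key n x y z
    by_cases hzy : z = y
    · subst hzy
      have hΨ : (∑ m ∈ range (n + 2),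
            (x ^ m * (x - z + z) ^ (n + 1 - m) - z ^ m * z ^ (n + 1 - m)))
          = ((n : ℝ) + 2) * (x ^ (n + 1) - z ^ (n + 1)) := by
        have he : ∀ m ∈ range (n + 2),
            x ^ m * (x - z + z) ^ (n + 1 - m) - z ^ m * z ^ (n + 1 - m)
              = x ^ (n + 1) - z ^ (n + 1) := by
          intro m hm
          rw [mem_range] at hm
          rw [sub_add_cancel, ← pow_add, ← pow_add,
            show m + (n + 1 - m) = n + 1 from by omega]
        rw [Finset.sum_congr rfl he, Finset.sum_const, card_range, nsmul_eq_mul]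
        push_cast
        ring
      rw [hΨ] at hkey
      have hp := odd_diff_pos (n + 1) hodd hxy
      have h2 : 0 < Qp n x z z * (x - z) ^ 2 := by
        have h3 : Qp n x z z * (x - z) ^ 2
            = ((n : ℝ) + 2) * ((x ^ (n + 1) - z ^ (n + 1)) * (x - z)) := by
          rw [sq]
          linear_combination (x - z) * hkey
        rw [h3]
        exact mul_pos hnpos hp
      nlinarith [sq_nonneg (x - z)]
    · have hu : x - y ≠ 0 := sub_ne_zero.mpr hxy
      have hv : z - y ≠ 0 := sub_ne_zero.mpr hzy
      have hg := gmul_pos (n + 2) (by obtain ⟨r, hr⟩ := hn; exact ⟨r + 1, by omega⟩) (by omega) y (x - y) (z - y) hu hv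
      rw [show y + (x - y) + (z - y) = x - y + z from by ring,
        show y + (x - y) = x from by ring, show y + (z - y) = z from by ring] at hg
      have hgeom1 := geom_sum₂_mul x (x - y + z) (n + 2)
      rw [show x - (x - y + z) = y - z from by ring] at hgeom1
      simp only [show n + 2 - 1 = n + 1 from rfl] at hgeom1
      have hgeom2 := geom_sum₂_mul y z (n + 2)
      simp only [show n + 2 - 1 = n + 1 from rfl] at hgeom2
      have hΦ : (y - z) * (∑ m ∈ range (n + 2),
            (x ^ m * (x - y + z) ^ (n + 1 - m) - y ^ m * z ^ (n + 1 - m)))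
          = x ^ (n + 2) - (x - y + z) ^ (n + 2) - y ^ (n + 2) + z ^ (n + 2) := by
        rw [Finset.sum_sub_distrib]
        linear_combination hgeom1 - hgeom2
      have hD : Qp n x y z * ((x - y) * (z - y)) ^ 2
          = ((x - y + z) ^ (n + 2) - x ^ (n + 2) - z ^ (n + 2) + y ^ (n + 2))
            * ((x - y) * (z - y)) := by
        linear_combination (-(x - y) * (z - y) * (y - z)) * hkey + (-(x - y) * (z - y)) * hΦ
      have h2 : 0 < Qp n x y z * ((x - y) * (z - y)) ^ 2 := by
        rw [hD]
        exact hg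
      nlinarith [sq_nonneg ((x - y) * (z - y))]

lemma Qp_continuous (n : ℕ) : Continuous fun p : ℝ × ℝ × ℝ => Qp n p.1 p.2.1 p.2.2 := by
  unfold Qp
  fun_prop

end PhaseAux

open PhaseAux Finset in
/-- For `k ≥ 2`, `P_k(ξ₁, ξ₂, ξ₃) ∼ max{|ξ₁|,|ξ₂|,|ξ₃|}^{2k−2}`. -/
theorem phasePoly_comparable (k : ℕ) (hk : 2 ≤ k) :
    ∃ c C : ℝ, 0 < c ∧ 0 < C ∧
      ∀ ξ₁ ξ₂ ξ₃ : ℝ,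
        c * max (max |ξ₁| |ξ₂|) |ξ₃| ^ (2 * k - 2) ≤ phasePoly k ξ₁ ξ₂ ξ₃ ∧
        phasePoly k ξ₁ ξ₂ ξ₃ ≤ C * max (max |ξ₁| |ξ₂|) |ξ₃| ^ (2 * k - 2) := by
  set n := 2 * k - 2 with hn
  have hn1 : 1 ≤ n := by omega
  have hnev : Even n := ⟨k - 1, by omega⟩
  have hnorm : ∀ p : ℝ × ℝ × ℝ, ‖p‖ = max (max |p.1| |p.2.1|) |p.2.2| := by
    intro p
    rw [Prod.norm_def, Prod.norm_def, Real.norm_eq_abs, Real.norm_eq_abs, Real.norm_eq_abs,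
      max_assoc]
  have hcont : Continuous (fun p : ℝ × ℝ × ℝ => Qp n p.1 p.2.1 p.2.2) := Qp_continuous n
  have hsne : (Metric.sphere (0 : ℝ × ℝ × ℝ) 1).Nonempty := by
    refine ⟨(1, 0, 0), ?_⟩
    rw [mem_sphere_zero_iff_norm, hnorm]
    norm_num
  obtain ⟨pc, hpc, hmin⟩ :=
    (isCompact_sphere (0 : ℝ × ℝ × ℝ) 1).exists_isMinOn hsne hcont.continuousOn
  obtain ⟨pC, hpC, hmax⟩ :=
    (isCompact_sphere (0 : ℝ × ℝ × ℝ) 1).exists_isMaxOn hsne hcont.continuousOn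
  have hsp : ∀ p : ℝ × ℝ × ℝ, p ∈ Metric.sphere (0 : ℝ × ℝ × ℝ) 1 →
      0 < Qp n p.1 p.2.1 p.2.2 := by
    intro p hp
    apply Qp_pos n hnev hn1
    rintro ⟨h1, h2, h3⟩
    have h4 : ‖p‖ = 1 := by rwa [mem_sphere_zero_iff_norm] at hp
    rw [hnorm, h1, h2, h3] at h4
    norm_num at h4
  refine ⟨Qp n pc.1 pc.2.1 pc.2.2, Qp n pC.1 pC.2.1 pC.2.2, hsp pc hpc, hsp pC hpC, ?_⟩
  intro a b c
  set M := max (max |a| |b|) |c| with hM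
  have hM0 : 0 ≤ M := le_trans (abs_nonneg c) (le_max_right _ _)
  rw [phasePoly_eq k (by omega) a b c, ← hn]
  rcases eq_or_lt_of_le hM0 with hM0' | hMpos
  · have ha : a = 0 := by
      have := le_trans (le_trans (le_max_left |a| |b|) (le_max_left _ |c|)) hM0'.ge
      exact abs_eq_zero.mp (le_antisymm this (abs_nonneg a))
    have hb : b = 0 := by
      have := le_trans (le_trans (le_max_right |a| |b|) (le_max_left _ |c|)) hM0'.ge
      exact abs_eq_zero.mp (le_antisymm this (abs_nonneg b))
    have hc : c = 0 := by
      have := le_trans (le_max_right (max |a| |b|) |c|) hM0'.ge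
      exact abs_eq_zero.mp (le_antisymm this (abs_nonneg c))
    have h0 : Qp n 0 0 0 = 0 := by
      rw [Qp_diag]
      have he : ∀ m ∈ range (n + 1), (0 : ℝ) ^ m * (0 : ℝ) ^ (n - m) = 0 := by
        intro m hm
        rw [mem_range] at hm
        rcases Nat.eq_zero_or_pos m with h | h
        · subst h
          rw [pow_zero, one_mul, zero_pow (by omega)]
        · rw [zero_pow (by omega), zero_mul]
      rw [Finset.sum_congr rfl he, Finset.sum_const]
      simp
    rw [ha, hb, hc, h0, ← hM0', zero_pow (by omega), mul_zero, mul_zero]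
    exact ⟨le_refl 0, le_refl 0⟩
  · have hMne : M ≠ 0 := ne_of_gt hMpos
    have hball : ((a / M, b / M, c / M) : ℝ × ℝ × ℝ) ∈ Metric.sphere (0 : ℝ × ℝ × ℝ) 1 := by
      rw [mem_sphere_zero_iff_norm, hnorm]
      simp only
      rw [abs_div, abs_div, abs_div, abs_of_pos hMpos, max_div_div_right hM0,
        max_div_div_right hM0, ← hM]
      exact div_self hMne
    have hmin' := isMinOn_iff.mp hmin _ hball
    have hmax' := isMaxOn_iff.mp hmax _ hball
    simp only at hmin' hmax'
    have hh := Qp_homog n M (a / M) (b / M) (c / M)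
    rw [mul_div_cancel₀ a hMne, mul_div_cancel₀ b hMne, mul_div_cancel₀ c hMne] at hh
    rw [hh]
    constructor
    · rw [mul_comm]
      exact mul_le_mul_of_nonneg_left hmin' (pow_nonneg hM0 n)
    · rw [mul_comm (Qp n pC.1 pC.2.1 pC.2.2) (M ^ n)]
      exact mul_le_mul_of_nonneg_left hmax' (pow_nonneg hM0 n)
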